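/- (Permutation rule) Every closed upper set Z of Λ* satisfies: if yαβz ∈ Z and yγz ∈ Z, where α, β, γ ∈ Λ with α, β incomparable and both strictly below γ, and y, z ∈ Λ*, then yβαz ∈ Z. -/
import Mathlib


/-- The Higman ordering on words over an ordered alphabet `Λ`:
`x ≤ y` iff `y` has a subword that is letterwise above `x`. -/
def HigmanLE {Λ : Type*} [PartialOrder Λ] (x y : List Λ) : Prop :=
  List.SublistForall₂ (· ≤ ·) x y

/-- The strict Higman ordering. -/
def HigmanLT {Λ : Type*} [PartialOrder Λ] (x y : List Λ) : Prop :=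
  HigmanLE x y ∧ ¬ HigmanLE y x

/-- The upper cone `X^Δ` of a set of words. -/
def upperCone {Λ : Type*} [PartialOrder Λ] (X : Set (List Λ)) : Set (List Λ) :=
  {y | ∀ x ∈ X, HigmanLE x y}

/-- The lower cone `X^∇` of a set of words. -/
def lowerCone {Λ : Type*} [PartialOrder Λ] (X : Set (List Λ)) : Set (List Λ) :=
  {y | ∀ x ∈ X, HigmanLE y x}

/-- Elementwise concatenation `XY` of two sets of words. -/
def concatSet {Λ : Type*} (X Y : Set (List Λ)) : Set (List Λ) :=
  {w | ∃ x ∈ X, ∃ y ∈ Y, w = x ++ y}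

/-- A (MacNeille) closed upper set of words: `Z = Z^{∇Δ}`. -/
def ClosedUpper {Λ : Type*} [PartialOrder Λ] (Z : Set (List Λ)) : Prop :=
  Z = upperCone (lowerCone Z)

/-- A (MacNeille) closed lower set of words: `W = W^{Δ∇}`. -/
def ClosedLower {Λ : Type*} [PartialOrder Λ] (W : Set (List Λ)) : Prop :=
  W = lowerCone (upperCone W)

/-- An upper set of words with respect to the Higman ordering. -/
def IsUpperWordSet {Λ : Type*} [PartialOrder Λ] (Z : Set (List Λ)) : Prop :=
  ∀ x y : List Λ, HigmanLE x y → x ∈ Z → y ∈ Z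

/-- A finitely generated lower set of words. -/
def FinGenLowerWords {Λ : Type*} [PartialOrder Λ] (S : Set (List Λ)) : Prop :=
  ∃ F : Finset (List Λ), S = {x | ∃ w ∈ F, HigmanLE x w}

/-- A finitely generated lower set of letters. -/
def FinGenLowerLetters {Λ : Type*} [PartialOrder Λ] (S : Set Λ) : Prop :=
  ∃ F : Finset Λ, S = {x | ∃ w ∈ F, x ≤ w}

/-- Well-foundedness: no infinite strictly decreasing sequence. -/
def NoInfiniteDescent {Λ : Type*} [PartialOrder Λ] : Prop :=
  ¬ ∃ f : ℕ → Λ, ∀ n, f (n + 1) < f n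

/-- Stability under the cancellation rule. -/
def StableCancel {Λ : Type*} [PartialOrder Λ] (Z : Set (List Λ)) : Prop :=
  ∀ (y z : List Λ) (α β : Λ), (¬ ∃ c, c ≤ α ∧ c ≤ β) →
    y ++ α :: z ∈ Z → y ++ β :: z ∈ Z → y ++ z ∈ Z

/-- Stability under the reduction rule. -/
def StableReduce {Λ : Type*} [PartialOrder Λ] (Z : Set (List Λ)) : Prop :=
  ∀ (y z : List Λ) (α γ : Λ), α < γ →
    y ++ α :: α :: z ∈ Z → y ++ γ :: z ∈ Z → y ++ α :: z ∈ Z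

/-- Stability under the permutation rule. -/
def StablePerm {Λ : Type*} [PartialOrder Λ] (Z : Set (List Λ)) : Prop :=
  ∀ (y z : List Λ) (α β γ : Λ), ¬ α ≤ β → ¬ β ≤ α → α < γ → β < γ →
    y ++ α :: β :: z ∈ Z → y ++ γ :: z ∈ Z → y ++ β :: α :: z ∈ Z

/-- Stability under the meet rule. -/
def StableMeet {Λ : Type*} [PartialOrder Λ] (Z : Set (List Λ)) : Prop :=
  ∀ (y z : List Λ) (α β m : Λ), ¬ α ≤ β → ¬ β ≤ α →
    IsGLB ({α, β} : Set Λ) m →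
    y ++ α :: z ∈ Z → y ++ β :: z ∈ Z → y ++ m :: z ∈ Z

/-- Stability under all four rules. -/
def StableAll {Λ : Type*} [PartialOrder Λ] (Z : Set (List Λ)) : Prop :=
  StableCancel Z ∧ StableReduce Z ∧ StablePerm Z ∧ StableMeet Z

/-- `[Y]`: the smallest upper set containing `Y` that is stable under the four rules. -/
def stableClosure {Λ : Type*} [PartialOrder Λ] (Y : Set (List Λ)) : Set (List Λ) :=
  ⋂₀ {Z : Set (List Λ) | Y ⊆ Z ∧ IsUpperWordSet Z ∧ StableAll Z}


namespace HigmanAux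

open List

variable {Λ : Type*} {r : Λ → Λ → Prop}

theorem split_append {x y z : List Λ} (h : SublistForall₂ r x (y ++ z)) :
    ∃ x₁ x₂, x = x₁ ++ x₂ ∧ SublistForall₂ r x₁ y ∧ SublistForall₂ r x₂ z := by
  induction y generalizing x with
  | nil => exact ⟨[], x, rfl, SublistForall₂.nil, h⟩
  | cons a y ih =>
    cases h with
    | nil => exact ⟨[], [], rfl, SublistForall₂.nil, SublistForall₂.nil⟩
    | cons hr h =>
      obtain ⟨x₁, x₂, rfl, h1, h2⟩ := ih h
      exact ⟨_ :: x₁, x₂, rfl, SublistForall₂.cons hr h1, h2⟩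
    | cons_right h =>
      obtain ⟨x₁, x₂, rfl, h1, h2⟩ := ih h
      exact ⟨x₁, x₂, rfl, SublistForall₂.cons_right h1, h2⟩

theorem append_combine {x₁ x₂ y z : List Λ} (h1 : SublistForall₂ r x₁ y)
    (h2 : SublistForall₂ r x₂ z) : SublistForall₂ r (x₁ ++ x₂) (y ++ z) := by
  induction h1 with
  | nil =>
    induction ‹List Λ› with
    | nil => exact h2
    | cons a l ih => exact SublistForall₂.cons_right ih
  | cons hr _ ih => exact SublistForall₂.cons hr ih
  | cons_right _ ih => exact SublistForall₂.cons_right ih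

theorem singleton_cases {x : List Λ} {a : Λ} (h : SublistForall₂ r x [a]) :
    x = [] ∨ ∃ b, x = [b] ∧ r b a := by
  cases h with
  | nil => exact Or.inl rfl
  | cons hr h => cases h with
    | nil => exact Or.inr ⟨_, rfl, hr⟩
  | cons_right h => cases h with
    | nil => exact Or.inl rfl

theorem higman_trans {Λ : Type*} [PartialOrder Λ] {x y z : List Λ}
    (h1 : HigmanLE x y) (h2 : HigmanLE y z) : HigmanLE x z :=
  IsTrans.trans (r := List.SublistForall₂ (· ≤ ·)) x y z h1 h2

theorem sublist_higman {Λ : Type*} [PartialOrder Λ] {x y : List Λ}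
    (h : x <+ y) : HigmanLE x y :=
  h.sublistForall₂

/-- Key combinatorial lemma: if `x ≤ yαβz` and `x ≤ yγz` then `x ≤ yβαz`. -/
theorem key {Λ : Type*} [PartialOrder Λ] {α β γ : Λ} {y z x : List Λ}
    (h1 : HigmanLE x (y ++ α :: β :: z)) (h2 : HigmanLE x (y ++ γ :: z)) :
    HigmanLE x (y ++ β :: α :: z) := by
  have e1 : y ++ α :: β :: z = y ++ ([α] ++ ([β] ++ z)) := by simp
  rw [e1] at h1
  obtain ⟨p, w, rfl, hp, hw⟩ := split_append h1
  obtain ⟨m1, w2, rfl, hm1, hw2⟩ := split_append hw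
  obtain ⟨m2, q, rfl, hm2, hq⟩ := split_append hw2
  have goal_eq : y ++ β :: α :: z = y ++ ([β] ++ (α :: z)) := by simp
  rw [goal_eq]
  rcases singleton_cases hm1 with rfl | ⟨a, rfl, ha⟩
  · -- m1 = [] : x = p ++ m2 ++ q
    simp only [List.nil_append]
    exact append_combine hp (append_combine hm2 (SublistForall₂.cons_right hq))
  · rcases singleton_cases hm2 with rfl | ⟨b, rfl, hb⟩
    · -- m2 = [] : x = p ++ [a] ++ q
      simp only [List.nil_append]
      refine append_combine hp ?_
      exact SublistForall₂.cons_right (SublistForall₂.cons ha hq)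
    · -- hard case: x = p ++ a :: b :: q
      have e2 : y ++ γ :: z = y ++ ([γ] ++ z) := by simp
      rw [e2] at h2
      obtain ⟨s1, w', he, hs1, hw'⟩ := split_append h2
      obtain ⟨s2, t, rfl, hs2, ht⟩ := split_append hw'
      rcases singleton_cases hs2 with rfl | ⟨c, rfl, _⟩
      · -- s2 = [] : x = s1 ++ t
        rw [List.nil_append] at he
        rw [he]
        exact append_combine hs1
          (SublistForall₂.cons_right (SublistForall₂.cons_right ht))
      · -- s2 = [c]
        have he' : (p ++ [a]) ++ (b :: q) = s1 ++ (c :: t) := by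
          simpa using he
        rcases List.append_eq_append_iff.mp he' with ⟨u, hu1, _⟩ | ⟨u, hu1, hu2⟩
        · -- s1 = (p ++ [a]) ++ u
          have hpa : HigmanLE (p ++ [a]) y :=
            higman_trans (sublist_higman (hu1 ▸ List.sublist_append_left _ _)) hs1
          have : HigmanLE ((p ++ [a]) ++ (b :: q)) (y ++ ([β] ++ (α :: z))) :=
            append_combine hpa
              (SublistForall₂.cons hb (SublistForall₂.cons_right hq))
          simpa using this
        · -- p ++ [a] = s1 ++ u
          cases u with
          | nil =>
            rw [List.append_nil] at hu1
            have hpa : HigmanLE (p ++ [a]) y := hu1 ▸ hs1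
            have : HigmanLE ((p ++ [a]) ++ (b :: q)) (y ++ ([β] ++ (α :: z))) :=
              append_combine hpa
                (SublistForall₂.cons hb (SublistForall₂.cons_right hq))
            simpa using this
          | cons c' u' =>
            have ht' : t = u' ++ b :: q := by
              have := hu2
              simp only [List.cons_append] at this
              exact (List.cons.injEq _ _ _ _ ▸ this).2
            have hbq : HigmanLE (b :: q) z :=
              higman_trans (sublist_higman (ht' ▸ List.sublist_append_right u' _)) ht
            refine append_combine hp ?_
            exact SublistForall₂.cons_right (SublistForall₂.cons ha hbq)

end HigmanAux

/-- permutation rule: every closed upper set `Z` of `Λ*` satisfies: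
if `yαβz ∈ Z` and `yγz ∈ Z` with `α, β` incomparable and both strictly below `γ`,
then `yβαz ∈ Z`. -/
theorem closedUpper_perm {Λ : Type*} [PartialOrder Λ]
    (Z : Set (List Λ)) (hZ : ClosedUpper Z) : StablePerm Z := by
  intro y z α β γ _ _ _ _ h1 h2
  rw [hZ]
  intro x hx
  exact HigmanAux.key (hx _ h1) (hx _ h2)
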